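/- Let N, M ≥ 1 and let k, l ∈ ℂ with k ≠ l. Let K = J^{[N]}[k], L = (J^{[M]}[l])ᵀ, and let G be the N×M matrix with entries g_{ij} = C(i+j−2, i−1)·(−1)^{i−1}/(k−l)^{i+j−1}. Let R be any N×N lower-triangular Toeplitz matrix (R_{ij} = a_{i−j} for i ≥ j and R_{ij} = 0 for i < j, for some a₀, …, a_{N−1} ∈ ℂ) and let S be any M×M lower-triangular Toeplitz matrix. Then M̂ = R·G·Sᵀ satisfies the Sylvester equation K·M̂ − M̂·L = r·sᵀ, where r = R·e₁⁽ᴺ⁾ and s = S·e₁⁽ᴹ⁾. -/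

import Mathlib

open Matrix

/-- The `N×N` lower-triangular Jordan block with `k` on the diagonal and `1` on the
first subdiagonal. -/
def jordanBlock (N : ℕ) (k : ℂ) : Matrix (Fin N) (Fin N) ℂ :=
  Matrix.of fun i j =>
    if (i : ℕ) = (j : ℕ) then k else if (i : ℕ) = (j : ℕ) + 1 then 1 else 0

/-- The `N×N` lower-triangular Toeplitz matrix with entries `a_{i−j}` for `i ≥ j`. -/
def lowerToeplitz (N : ℕ) (a : ℕ → ℂ) : Matrix (Fin N) (Fin N) ℂ :=
  Matrix.of fun i j => if (j : ℕ) ≤ (i : ℕ) then a ((i : ℕ) - (j : ℕ)) else 0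

lemma jordan_mul_apply {n m : ℕ} (c : ℂ) (A : Matrix (Fin n) (Fin m) ℂ) (i : Fin n) (j : Fin m) :
    (jordanBlock n c * A) i j =
      c * A i j + if h : 0 < (i : ℕ) then A ⟨(i:ℕ) - 1, by omega⟩ j else 0 := by
  rw [Matrix.mul_apply]
  have hsplit : ∀ x : Fin n, jordanBlock n c i x * A x j =
      (if i = x then c * A x j else 0) +
      (if (i:ℕ) = (x:ℕ)+1 then A x j else 0) := by
    intro x
    simp only [jordanBlock, Matrix.of_apply, Fin.ext_iff]
    by_cases h1 : (i:ℕ) = (x:ℕ) <;> by_cases h2 : (i:ℕ) = (x:ℕ)+1 <;>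
      simp [h1, h2] <;> omega
  rw [Finset.sum_congr rfl (fun x _ => hsplit x), Finset.sum_add_distrib]
  congr 1
  · simp
  · by_cases h : 0 < (i:ℕ)
    · rw [dif_pos h, Finset.sum_eq_single (⟨(i:ℕ)-1, by omega⟩ : Fin n)]
      · simp; omega
      · intro x _ hx
        rw [if_neg]
        intro hc
        exact hx (by simp [Fin.ext_iff]; omega)
      · simp
    · rw [dif_neg h, Finset.sum_eq_zero]
      intro x _
      rw [if_neg]; omega

lemma mul_jordan_apply {n m : ℕ} (c : ℂ) (A : Matrix (Fin m) (Fin n) ℂ) (i : Fin m) (j : Fin n) :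
    (A * jordanBlock n c) i j =
      c * A i j + if h : (j:ℕ)+1 < n then A i ⟨(j:ℕ)+1, h⟩ else 0 := by
  rw [Matrix.mul_apply]
  have hsplit : ∀ x : Fin n, A i x * jordanBlock n c x j =
      (if x = j then c * A i x else 0) +
      (if (x:ℕ) = (j:ℕ)+1 then A i x else 0) := by
    intro x
    simp only [jordanBlock, Matrix.of_apply, Fin.ext_iff]
    by_cases h1 : (x:ℕ) = (j:ℕ) <;> by_cases h2 : (x:ℕ) = (j:ℕ)+1 <;>
      simp [h1, h2, mul_comm] <;> omega
  rw [Finset.sum_congr rfl (fun x _ => hsplit x), Finset.sum_add_distrib]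
  congr 1
  · simp
  · by_cases h : (j:ℕ)+1 < n
    · rw [dif_pos h, Finset.sum_eq_single (⟨(j:ℕ)+1, h⟩ : Fin n)]
      · simp
      · intro x _ hx
        rw [if_neg]
        intro hc
        exact hx (by simp [Fin.ext_iff]; omega)
      · simp
    · rw [dif_neg h, Finset.sum_eq_zero]
      intro x _
      rw [if_neg]
      have := x.2; omega

lemma mul_jordanT_apply {n m : ℕ} (c : ℂ) (A : Matrix (Fin m) (Fin n) ℂ) (i : Fin m) (j : Fin n) :
    (A * (jordanBlock n c)ᵀ) i j =
      c * A i j + if h : 0 < (j:ℕ) then A i ⟨(j:ℕ)-1, by omega⟩ else 0 := by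
  have : (A * (jordanBlock n c)ᵀ) i j = (jordanBlock n c * Aᵀ) j i := by
    rw [Matrix.mul_apply, Matrix.mul_apply]
    simp [mul_comm]
  rw [this, jordan_mul_apply]
  simp

lemma jordan_toeplitz_comm (n : ℕ) (c : ℂ) (a : ℕ → ℂ) :
    jordanBlock n c * lowerToeplitz n a = lowerToeplitz n a * jordanBlock n c := by
  ext i j
  rw [jordan_mul_apply, mul_jordan_apply]
  congr 1
  have hi := i.2; have hj := j.2
  by_cases h1 : 0 < (i:ℕ) <;> by_cases h2 : (j:ℕ)+1 < n
  · rw [dif_pos h1, dif_pos h2]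
    simp only [lowerToeplitz, Matrix.of_apply]
    split_ifs <;> first | (congr 1; omega) | omega | rfl
  · rw [dif_pos h1, dif_neg h2]
    simp only [lowerToeplitz, Matrix.of_apply]
    split_ifs <;> first | omega | rfl
  · rw [dif_neg h1, dif_pos h2]
    simp only [lowerToeplitz, Matrix.of_apply]
    split_ifs <;> first | omega | rfl
  · rw [dif_neg h1, dif_neg h2]

lemma jordan_sylvester_base (N M : ℕ) (k l : ℂ) (hkl : k ≠ l) :
    jordanBlock N k * (Matrix.of fun (i : Fin N) (j : Fin M) =>
      (Nat.choose ((i : ℕ) + (j : ℕ)) (i : ℕ) : ℂ) * (-1 : ℂ) ^ (i : ℕ) /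
        (k - l) ^ ((i : ℕ) + (j : ℕ) + 1)) -
    (Matrix.of fun (i : Fin N) (j : Fin M) =>
      (Nat.choose ((i : ℕ) + (j : ℕ)) (i : ℕ) : ℂ) * (-1 : ℂ) ^ (i : ℕ) /
        (k - l) ^ ((i : ℕ) + (j : ℕ) + 1)) * (jordanBlock M l)ᵀ =
    Matrix.vecMulVec (fun (i : Fin N) => if (i : ℕ) = 0 then (1 : ℂ) else 0)
      (fun (j : Fin M) => if (j : ℕ) = 0 then (1 : ℂ) else 0) := by
  have hd : k - l ≠ 0 := sub_ne_zero.mpr hkl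
  ext i j
  rw [Matrix.sub_apply, jordan_mul_apply, mul_jordanT_apply, Matrix.vecMulVec_apply]
  simp only [Matrix.of_apply]
  by_cases h1 : 0 < (i:ℕ) <;> by_cases h2 : 0 < (j:ℕ)
  · rw [dif_pos h1, dif_pos h2]
    obtain ⟨p, hp⟩ : ∃ p, (i:ℕ) = p + 1 := ⟨(i:ℕ)-1, by omega⟩
    obtain ⟨q, hq⟩ : ∃ q, (j:ℕ) = q + 1 := ⟨(j:ℕ)-1, by omega⟩
    simp only [hp, hq, Nat.add_sub_cancel, if_neg (by omega : ¬ p+1 = 0),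
      if_neg (by omega : ¬ q+1 = 0)]
    have hpas : (p+1+(q+1)).choose (p+1) =
        (p+(q+1)).choose p + (p+(q+1)).choose (p+1) := by
      rw [show p+1+(q+1) = (p+(q+1))+1 by omega]; exact Nat.choose_succ_succ _ _
    rw [show p+1+q = p+(q+1) by omega, hpas]
    push_cast
    field_simp
    ring
  · rw [dif_pos h1, dif_neg h2]
    obtain ⟨p, hp⟩ : ∃ p, (i:ℕ) = p + 1 := ⟨(i:ℕ)-1, by omega⟩
    have hj : (j:ℕ) = 0 := by omega
    simp only [hp, hj, Nat.add_sub_cancel, Nat.add_zero, Nat.choose_self,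
      if_neg (by omega : ¬ p+1 = 0), if_pos rfl]
    field_simp
    ring
  · rw [dif_neg h1, dif_pos h2]
    obtain ⟨q, hq⟩ : ∃ q, (j:ℕ) = q + 1 := ⟨(j:ℕ)-1, by omega⟩
    have hi : (i:ℕ) = 0 := by omega
    simp only [hi, hq, Nat.add_sub_cancel, Nat.zero_add, Nat.choose_zero_right,
      if_neg (by omega : ¬ q+1 = 0), if_pos rfl]
    field_simp
    ring
  · rw [dif_neg h1, dif_neg h2]
    have hi : (i:ℕ) = 0 := by omega
    have hj : (j:ℕ) = 0 := by omega
    simp only [hi, hj]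
    field_simp
    simp

lemma mul_vecMulVec {n m p : ℕ} (R : Matrix (Fin n) (Fin m) ℂ) (u : Fin m → ℂ) (v : Fin p → ℂ) :
    R * Matrix.vecMulVec u v = Matrix.vecMulVec (R *ᵥ u) v := by
  ext i j
  simp [Matrix.mul_apply, Matrix.vecMulVec_apply, Matrix.mulVec, dotProduct,
    Finset.sum_mul, mul_assoc]

lemma vecMulVec_mul_transpose {n m p : ℕ} (S : Matrix (Fin n) (Fin m) ℂ)
    (u : Fin p → ℂ) (v : Fin m → ℂ) :
    Matrix.vecMulVec u v * Sᵀ = Matrix.vecMulVec u (S *ᵥ v) := by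
  ext i j
  simp [Matrix.mul_apply, Matrix.vecMulVec_apply, Matrix.mulVec, dotProduct,
    Finset.mul_sum, mul_comm, mul_left_comm]

/-- dressing the solution `G` of the Jordan-block Sylvester equation with
lower-triangular Toeplitz matrices `R, S` gives `M̂ = R·G·Sᵀ` with
`K·M̂ − M̂·L = r·sᵀ`, where `r = R·e₁`, `s = S·e₁`. -/
theorem jordan_sylvester_dressed (N M : ℕ) (hN : 1 ≤ N) (hM : 1 ≤ M)
    (k l : ℂ) (hkl : k ≠ l)
    (G : Matrix (Fin N) (Fin M) ℂ)
    (hG : G = Matrix.of fun (i : Fin N) (j : Fin M) =>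
      (Nat.choose ((i : ℕ) + (j : ℕ)) (i : ℕ) : ℂ) * (-1 : ℂ) ^ (i : ℕ) /
        (k - l) ^ ((i : ℕ) + (j : ℕ) + 1))
    (a b : ℕ → ℂ)
    (R : Matrix (Fin N) (Fin N) ℂ) (hR : R = lowerToeplitz N a)
    (S : Matrix (Fin M) (Fin M) ℂ) (hS : S = lowerToeplitz M b)
    (e1N : Fin N → ℂ) (he1N : e1N = fun (i : Fin N) => if (i : ℕ) = 0 then (1 : ℂ) else 0)
    (e1M : Fin M → ℂ) (he1M : e1M = fun (i : Fin M) => if (i : ℕ) = 0 then (1 : ℂ) else 0)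
    (Mh : Matrix (Fin N) (Fin M) ℂ) (hMh : Mh = R * G * Sᵀ)
    (r : Fin N → ℂ) (hr : r = R *ᵥ e1N)
    (s : Fin M → ℂ) (hs : s = S *ᵥ e1M) :
    jordanBlock N k * Mh - Mh * (jordanBlock M l)ᵀ = Matrix.vecMulVec r s := by
  subst hMh hr hs he1N he1M
  have hcommR : jordanBlock N k * R = R * jordanBlock N k := by
    rw [hR]; exact jordan_toeplitz_comm N k a
  have hcommS : Sᵀ * (jordanBlock M l)ᵀ = (jordanBlock M l)ᵀ * Sᵀ := by
    rw [← Matrix.transpose_mul, ← Matrix.transpose_mul, hS, jordan_toeplitz_comm]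
  calc jordanBlock N k * (R * G * Sᵀ) - R * G * Sᵀ * (jordanBlock M l)ᵀ
      = R * (jordanBlock N k * G - G * (jordanBlock M l)ᵀ) * Sᵀ := by
        rw [Matrix.mul_sub, Matrix.sub_mul]
        congr 1
        · rw [← Matrix.mul_assoc, ← Matrix.mul_assoc, hcommR, Matrix.mul_assoc R]
        · rw [Matrix.mul_assoc (R * G), hcommS, Matrix.mul_assoc, Matrix.mul_assoc,
            Matrix.mul_assoc]
    _ = Matrix.vecMulVec ((R *ᵥ fun i => if (i : ℕ) = 0 then (1:ℂ) else 0))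
          ((S *ᵥ fun i => if (i : ℕ) = 0 then (1:ℂ) else 0)) := by
        rw [hG, jordan_sylvester_base N M k l hkl, mul_vecMulVec, vecMulVec_mul_transpose]
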